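/- Let κ be a set, B ⊆ κ, α ∈ κ ∖ B, and n₀ ∈ ω. Suppose A : Ω → Set ℕ and s : Ω → ℕ → ω^{<ω} are such that for each n ∈ ℕ the set {ρ : n ∈ A(ρ)} and the map ρ ↦ s(ρ)(n) are measurable with respect to the σ-algebra on Ω generated by the coordinate projections ρ ↦ ρ(β,u,i) with β ∈ B, u ∈ ω^{<ω}, i ∈ ω (i.e., they factor through the restriction map Ω → ℕ^{B×ω^{<ω}×ω}), and suppose that t_{n₀}⌢n ⊆ s(ρ)(n) for every ρ and every n ∈ A(ρ). Then for ν-almost every ρ ∈ Ω: if t_{n₀} ∈ U_α(ρ), then the set {n ∈ A(ρ) : s(ρ)(n) ∈ W_α(ρ)} is finite. -/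

import Mathlib

open MeasureTheory
open scoped ENNReal

/-- `sFnP e α n ρ` is the finite sequence `t_n ⌢ ⟨ρ(α,t_n,0), …, ρ(α,t_n,n+1)⟩`. -/
def sFnP {κ : Type*} (e : ℕ → List ℕ) (α : κ) (n : ℕ) (ρ : κ × List ℕ × ℕ → ℕ) : List ℕ :=
  e n ++ List.ofFn fun i : Fin (n + 2) => ρ (α, e n, (i : ℕ))

/-- `WsetP e α ρ = {s : s_{α,t_n}(ρ) ⊆ s for some n}`. -/
def WsetP {κ : Type*} (e : ℕ → List ℕ) (α : κ) (ρ : κ × List ℕ × ℕ → ℕ) : Set (List ℕ) :=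
  {s | ∃ n, sFnP e α n ρ <+: s}

/-- `UsetP e α ρ = ω^{<ω} ∖ W_α(ρ)`. -/
def UsetP {κ : Type*} (e : ℕ → List ℕ) (α : κ) (ρ : κ × List ℕ × ℕ → ℕ) : Set (List ℕ) :=
  (WsetP e α ρ)ᶜ

/-- The σ-algebra on `Ω = ℕ^{κ×ω^{<ω}×ω}` generated by the coordinate projections with
first coordinate in `B`, i.e. the pullback of the product σ-algebra under the
restriction map `Ω → ℕ^{B×ω^{<ω}×ω}`. -/
def restrSigma {κ : Type*} (B : Set κ) : MeasurableSpace (κ × List ℕ × ℕ → ℕ) :=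
  MeasurableSpace.comap
    (fun (ρ : κ × List ℕ × ℕ → ℕ) (c : B × List ℕ × ℕ) => ρ ((c.1 : κ), c.2.1, c.2.2))
    inferInstance

lemma sFnP_length {κ : Type*} (e : ℕ → List ℕ) (α : κ) (m : ℕ) (ρ) :
    (sFnP e α m ρ).length = (e m).length + (m + 2) := by
  simp [sFnP]

lemma getD_of_prefix {t : List ℕ} {n : ℕ} {l : List ℕ} (h : t ++ [n] <+: l) :
    l.getD t.length 0 = n := by
  have hlen : t.length < l.length := by
    have := h.length_le
    simp at this; omega
  have h1 : t.length < (t ++ [n]).length := by simp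
  rw [List.getD_eq_getElem l 0 hlen, ← h.getElem h1]
  simp

lemma prefix_coord {κ : Type*} (e : ℕ → List ℕ) (α : κ) (m : ℕ) (ρ) (u : List ℕ)
    (h : sFnP e α m ρ <+: u) (i : ℕ) (hi : i < m + 2) :
    ρ (α, e m, i) = u.getD ((e m).length + i) 0 := by
  have hl : (e m).length + i < (sFnP e α m ρ).length := by rw [sFnP_length]; omega
  have hlen : (e m).length + i < u.length := lt_of_lt_of_le hl h.length_le
  rw [List.getD_eq_getElem u 0 hlen, ← h.getElem hl]
  simp only [sFnP]
  rw [List.getElem_append_right (Nat.le_add_right _ _)]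
  rw [List.getElem_ofFn]
  have h3 : (e m).length + i - (e m).length = i := by omega
  exact (congrArg (fun j : ℕ => ρ (α, e m, j)) h3).symm

lemma meas_ptcyl {κ : Type*} (F : Finset (κ × List ℕ × ℕ)) (g : κ × List ℕ × ℕ → ℕ) :
    MeasurableSet {ρ : κ × List ℕ × ℕ → ℕ | ∀ c ∈ F, ρ c = g c} := by
  have h : {ρ : κ × List ℕ × ℕ → ℕ | ∀ c ∈ F, ρ c = g c}
      = ⋂ c ∈ F, (fun ρ : κ × List ℕ × ℕ → ℕ => ρ c) ⁻¹' {g c} := by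
    ext ρ; simp
  rw [h]
  exact MeasurableSet.biInter F.countable_toSet fun c _ =>
    (measurable_pi_apply c) (measurableSet_singleton (g c))

lemma indep_lemma {κ : Type*} (ν : Measure (κ × List ℕ × ℕ → ℕ)) [IsProbabilityMeasure ν]
    (hν : ∀ (F : Finset (κ × List ℕ × ℕ)) (g : κ × List ℕ × ℕ → ℕ),
      ν {ρ | ∀ c ∈ F, ρ c = g c} = ∏ c ∈ F, ((2 : ℝ≥0∞)⁻¹) ^ (g c + 1))
    (B : Set κ) (α : κ) (hα : α ∉ B)
    (F : Finset (κ × List ℕ × ℕ)) (hF : ∀ c ∈ F, c.1 = α) (g : κ × List ℕ × ℕ → ℕ)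
    (S : Set (κ × List ℕ × ℕ → ℕ)) (hS : MeasurableSet[restrSigma B] S) :
    ν (S ∩ {ρ | ∀ c ∈ F, ρ c = g c}) = ν S * ν {ρ | ∀ c ∈ F, ρ c = g c} := by
  classical
  set T := {ρ : κ × List ℕ × ℕ → ℕ | ∀ c ∈ F, ρ c = g c} with hTdef
  set f : (κ × List ℕ × ℕ → ℕ) → (B × List ℕ × ℕ → ℕ) :=
    fun ρ c => ρ ((c.1 : κ), c.2.1, c.2.2) with hfdef
  obtain ⟨S', hS', rfl⟩ := MeasurableSpace.measurableSet_comap.mp hS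
  have hf : Measurable f := measurable_pi_lambda _ fun c => measurable_pi_apply _
  have hTm : MeasurableSet T := meas_ptcyl F g
  set ι : B × List ℕ × ℕ → κ × List ℕ × ℕ := fun c => ((c.1 : κ), c.2.1, c.2.2) with hιdef
  -- point cylinder computation
  have key : ∀ (J : Finset (B × List ℕ × ℕ)) (y : ∀ _ : J, ℕ),
      ν (f ⁻¹' (cylinder J {y}) ∩ T) = ν (f ⁻¹' (cylinder J {y})) * ν T := by
    intro J y
    set g' : κ × List ℕ × ℕ → ℕ := fun c =>
      if h : c.1 ∈ B then (fun d : B × List ℕ × ℕ =>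
        if hd : d ∈ J then y ⟨d, hd⟩ else 0) (⟨c.1, h⟩, c.2.1, c.2.2) else g c with hg'def
    have hg'ι : ∀ (d : B × List ℕ × ℕ) (hd : d ∈ J), g' (ι d) = y ⟨d, hd⟩ := by
      rintro ⟨⟨a, ha⟩, u, i⟩ hd
      simp only [g', ι, dif_pos ha, dif_pos hd]
    have hg'F : ∀ c ∈ F, g' c = g c := by
      intro c hc
      have h1 : c.1 ∉ B := by rw [hF c hc]; exact hα
      simp only [g', dif_neg h1]
    have hpre : f ⁻¹' (cylinder J {y}) = {ρ | ∀ c ∈ J.image ι, ρ c = g' c} := by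
      ext ρ
      simp only [Set.mem_preimage, mem_cylinder, Set.mem_singleton_iff, Set.mem_setOf_eq]
      constructor
      · intro h c hc
        obtain ⟨d, hd, rfl⟩ := Finset.mem_image.mp hc
        rw [hg'ι d hd]
        exact congrFun h ⟨d, hd⟩
      · intro h
        funext d
        have := h (ι d) (Finset.mem_image_of_mem ι d.2)
        rw [hg'ι d d.2] at this
        exact this
    have hdisj : Disjoint (J.image ι) F := by
      rw [Finset.disjoint_left]
      intro c hc hcF
      obtain ⟨d, _, rfl⟩ := Finset.mem_image.mp hc
      have : α ∈ B := by rw [← hF _ hcF]; exact d.1.2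
      exact hα this
    have hinter : f ⁻¹' (cylinder J {y}) ∩ T
        = {ρ | ∀ c ∈ J.image ι ∪ F, ρ c = g' c} := by
      rw [hpre]
      ext ρ
      simp only [Set.mem_inter_iff, Set.mem_setOf_eq, Finset.mem_union, hTdef]
      constructor
      · rintro ⟨h1, h2⟩ c hc
        rcases hc with hc | hc
        · exact h1 c hc
        · rw [hg'F c hc]; exact h2 c hc
      · intro h
        exact ⟨fun c hc => h c (Or.inl hc),
               fun c hc => (hg'F c hc) ▸ h c (Or.inr hc)⟩
    have hTg' : T = {ρ | ∀ c ∈ F, ρ c = g' c} := by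
      ext ρ
      simp only [hTdef, Set.mem_setOf_eq]
      exact forall₂_congr fun c hc => by rw [hg'F c hc]
    rw [hinter, hν _ g', Finset.prod_union hdisj, hpre, hν _ g', hTg', hν _ g']
  have main : ∀ S'' : Set ((B × List ℕ × ℕ) → ℕ), MeasurableSet S'' →
      ν (f ⁻¹' S'' ∩ T) = ν (f ⁻¹' S'') * ν T := by
    have := MeasurableSpace.induction_on_inter
      (C := fun S' _ => ν (f ⁻¹' S' ∩ T) = ν (f ⁻¹' S') * ν T)
      (s := measurableCylinders fun _ : B × List ℕ × ℕ => ℕ)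
      generateFrom_measurableCylinders.symm isPiSystem_measurableCylinders
      (by simp) ?basic ?compl ?iUnion
    · exact fun S' hS' => this S' hS'
    case basic =>
      intro t ht
      obtain ⟨J, Sset, hSm, rfl⟩ := (mem_measurableCylinders t).mp ht
      have hcnt : Sset.Countable := Set.to_countable Sset
      have hmeasD : ∀ y : (∀ _ : J, ℕ), MeasurableSet (f ⁻¹' (cylinder J {y})) :=
        fun y => hf ((measurableSet_singleton y).cylinder)
      have hpd : ∀ (y y' : (∀ _ : J, ℕ)), y ≠ y' →
          Disjoint (f ⁻¹' (cylinder J {y})) (f ⁻¹' (cylinder J {y'})) := by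
        intro y y' hne
        rw [Set.disjoint_left]
        intro ρ h1 h2
        exact hne ((show J.restrict (f ρ) = y from h1).symm.trans h2)
      have e2 : f ⁻¹' (cylinder J Sset) = ⋃ y ∈ Sset, f ⁻¹' (cylinder J {y}) := by
        ext ρ
        simp only [Set.mem_preimage, mem_cylinder, Set.mem_iUnion, Set.mem_singleton_iff]
        exact ⟨fun h => ⟨_, h, rfl⟩, fun ⟨y, hy, h⟩ => h ▸ hy⟩
      have e1 : f ⁻¹' (cylinder J Sset) ∩ T = ⋃ y ∈ Sset, (f ⁻¹' (cylinder J {y}) ∩ T) := by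
        rw [e2, Set.iUnion₂_inter]
      rw [e1, measure_biUnion hcnt
          (fun y _ y' _ hne => ((hpd y y' hne).mono Set.inter_subset_left Set.inter_subset_left))
          (fun y _ => (hmeasD y).inter hTm)]
      simp_rw [key]
      rw [ENNReal.tsum_mul_right,
        ← measure_biUnion hcnt (fun y _ y' _ hne => hpd y y' hne) (fun y _ => hmeasD y), ← e2]
    case compl =>
      intro t htm hC
      have hmt : MeasurableSet (f ⁻¹' t) := hf htm
      have h2 : f ⁻¹' tᶜ ∩ T = T \ (f ⁻¹' t ∩ T) := by
        ext ρ
        simp only [Set.preimage_compl, Set.mem_inter_iff, Set.mem_compl_iff, Set.mem_diff]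
        tauto
      rw [h2, measure_diff Set.inter_subset_right ((hmt.inter hTm).nullMeasurableSet)
        (measure_ne_top ν _), hC, Set.preimage_compl, prob_compl_eq_one_sub hmt,
        ENNReal.sub_mul (fun _ _ => measure_ne_top ν _), one_mul]
    case iUnion =>
      intro F' hdisj hmeas hC
      have h1 : f ⁻¹' (⋃ i, F' i) ∩ T = ⋃ i, (f ⁻¹' (F' i) ∩ T) := by
        rw [Set.preimage_iUnion, Set.iUnion_inter]
      have hdp : Pairwise (Function.onFun Disjoint fun i => f ⁻¹' (F' i)) :=
        fun i j hij => (hdisj hij).preimage f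
      rw [h1, measure_iUnion
          (fun i j hij => ((hdp hij).mono Set.inter_subset_left Set.inter_subset_left))
          (fun i => (hf (hmeas i)).inter hTm)]
      simp_rw [hC]
      rw [ENNReal.tsum_mul_right, ← measure_iUnion hdp (fun i => hf (hmeas i)),
        ← Set.preimage_iUnion]
  exact main S' hS'

lemma geom_tail (n : ℕ) : ∑' m : ℕ, (if n ≤ m then (2:ℝ≥0∞)⁻¹ ^ (m + 2) else 0) = 2⁻¹ ^ (n + 1) := by
  have hinj : Function.Injective fun k : ℕ => n + k := add_right_injective n
  rw [← Function.Injective.tsum_eq hinj ?_]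
  · calc ∑' k : ℕ, (if n ≤ n + k then (2:ℝ≥0∞)⁻¹ ^ (n + k + 2) else 0)
        = ∑' k : ℕ, (2:ℝ≥0∞)⁻¹ ^ (n + 2) * 2⁻¹ ^ k := by
          congr 1; funext k
          rw [if_pos (Nat.le_add_right n k), ← pow_add]
          ring_nf
      _ = 2⁻¹ ^ (n + 2) * (1 - 2⁻¹)⁻¹ := by rw [ENNReal.tsum_mul_left, ENNReal.tsum_geometric]
      _ = 2⁻¹ ^ (n + 1) * (2⁻¹ * 2) := by
          rw [ENNReal.one_sub_inv_two, inv_inv (2:ℝ≥0∞), pow_succ, mul_assoc]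
      _ = 2⁻¹ ^ (n + 1) := by
          rw [ENNReal.inv_mul_cancel two_ne_zero ENNReal.ofNat_ne_top, mul_one]
  · intro m hm
    simp only [Function.mem_support, ne_eq, ite_eq_right_iff, not_forall] at hm
    obtain ⟨hle, -⟩ := hm
    exact ⟨m - n, show n + (m - n) = m by omega⟩

lemma geom_total : (∑' n : ℕ, (2:ℝ≥0∞)⁻¹ ^ (n + 1)) ≠ ⊤ := by
  have h : ∑' n : ℕ, (2:ℝ≥0∞)⁻¹ ^ (n + 1) = (1 - 2⁻¹)⁻¹ * 2⁻¹ := by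
    simp_rw [pow_succ]
    rw [ENNReal.tsum_mul_right, ENNReal.tsum_geometric]
  rw [h, ENNReal.one_sub_inv_two, inv_inv (2:ℝ≥0∞)]
  exact ENNReal.mul_ne_top (by norm_num) (by norm_num)

theorem stmt3 {κ : Type*}
    (e : ℕ → List ℕ) (hbij : Function.Bijective e)
    (hord : ∀ n ℓ, e n <+: e ℓ → e n ≠ e ℓ → n < ℓ)
    (hsuc : ∀ n ℓ t k, e n = t ++ [k] → e ℓ = t ++ [k + 1] → n < ℓ)
    (ν : Measure (κ × List ℕ × ℕ → ℕ)) [IsProbabilityMeasure ν]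
    (hν : ∀ (F : Finset (κ × List ℕ × ℕ)) (g : κ × List ℕ × ℕ → ℕ),
      ν {ρ | ∀ c ∈ F, ρ c = g c} = ∏ c ∈ F, ((2 : ℝ≥0∞)⁻¹) ^ (g c + 1))
    (B : Set κ) (α : κ) (hα : α ∉ B) (n₀ : ℕ)
    (A : (κ × List ℕ × ℕ → ℕ) → Set ℕ)
    (s : (κ × List ℕ × ℕ → ℕ) → ℕ → List ℕ)
    (hA : ∀ n : ℕ, MeasurableSet[restrSigma B] {ρ | n ∈ A ρ})
    (hsm : ∀ (n : ℕ) (u : List ℕ), MeasurableSet[restrSigma B] {ρ | s ρ n = u})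
    (hext : ∀ ρ, ∀ n ∈ A ρ, e n₀ ++ [n] <+: s ρ n) :
    ∀ᵐ ρ ∂ν, e n₀ ∈ UsetP e α ρ → {n | n ∈ A ρ ∧ s ρ n ∈ WsetP e α ρ}.Finite := by
  classical
  choose mf hmf using fun n : ℕ => hbij.2 (e n₀ ++ [n])
  have hmf_mono : StrictMono mf := strictMono_nat_of_lt_succ fun n =>
    hsuc (mf n) (mf (n + 1)) (e n₀) n (hmf n) (hmf (n + 1))
  have hmono : ∀ n m : ℕ, e n₀ ++ [n] <+: e m → n ≤ m := by
    intro n m h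
    have h1 : mf n ≤ m := by
      by_cases he : e (mf n) = e m
      · exact le_of_eq (hbij.1 he)
      · exact le_of_lt (hord (mf n) m (by rw [hmf n]; exact h) he)
    exact le_trans hmf_mono.le_apply h1
  have hle : restrSigma B ≤ (inferInstance : MeasurableSpace (κ × List ℕ × ℕ → ℕ)) :=
    measurable_iff_comap_le.mp (measurable_pi_lambda _ fun c => measurable_pi_apply _)
  set E : ℕ → Set (κ × List ℕ × ℕ → ℕ) :=
    fun n => {ρ | ∃ m, e n₀ ++ [n] <+: e m ∧ sFnP e α m ρ <+: s ρ n} with hEdef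
  -- sum of fibers of s equals 1
  have hsum1 : ∀ n : ℕ, ∑' u : List ℕ, ν {ρ | s ρ n = u} = 1 := by
    intro n
    have hdisj : Pairwise (Function.onFun Disjoint fun u : List ℕ => {ρ | s ρ n = u}) := by
      intro u v huv
      rw [Function.onFun, Set.disjoint_left]
      rintro ρ h1 h2
      exact huv ((Set.mem_setOf_eq ▸ h1).symm.trans h2)
    rw [← measure_iUnion hdisj (fun u => hle _ (hsm n u))]
    have huniv : (⋃ u : List ℕ, {ρ : κ × List ℕ × ℕ → ℕ | s ρ n = u}) = Set.univ := by
      ext ρ; simp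
    rw [huniv, measure_univ]
  -- measure bound on E n
  have hEbound : ∀ n : ℕ, ν (E n) ≤ 2⁻¹ ^ (n + 1) := by
    intro n
    set X : List ℕ → ℕ → Set (κ × List ℕ × ℕ → ℕ) := fun u m =>
      {ρ | s ρ n = u} ∩ {ρ | e n₀ ++ [n] <+: e m ∧ sFnP e α m ρ <+: u} with hXdef
    have hcover : E n ⊆ ⋃ (u : List ℕ) (m : ℕ), X u m := by
      rintro ρ ⟨m, h1, h2⟩
      exact Set.mem_iUnion.mpr ⟨s ρ n, Set.mem_iUnion.mpr ⟨m, ⟨rfl, h1, h2⟩⟩⟩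
    have hterm : ∀ (u : List ℕ) (m : ℕ),
        ν (X u m) ≤ (if n ≤ m then ν {ρ | s ρ n = u} * 2⁻¹ ^ (m + 2) else 0) := by
      intro u m
      by_cases hc : e n₀ ++ [n] <+: e m
      · rw [if_pos (hmono n m hc)]
        set Fm : Finset (κ × List ℕ × ℕ) := (Finset.range (m + 2)).image fun i => (α, e m, i)
          with hFmdef
        set gm : κ × List ℕ × ℕ → ℕ := fun c => u.getD ((e m).length + c.2.2) 0 with hgmdef
        have hsub : {ρ : κ × List ℕ × ℕ → ℕ | e n₀ ++ [n] <+: e m ∧ sFnP e α m ρ <+: u}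
            ⊆ {ρ | ∀ c ∈ Fm, ρ c = gm c} := by
          rintro ρ ⟨-, h2⟩ c hc'
          obtain ⟨i, hi, rfl⟩ := Finset.mem_image.mp hc'
          exact prefix_coord e α m ρ u h2 i (Finset.mem_range.mp hi)
        have hFα : ∀ c ∈ Fm, c.1 = α := by
          intro c hc'
          obtain ⟨i, -, rfl⟩ := Finset.mem_image.mp hc'
          rfl
        have hcard : Fm.card = m + 2 := by
          rw [hFmdef, Finset.card_image_of_injective _
            (fun i j h => by simpa using congrArg (fun c : κ × List ℕ × ℕ => c.2.2) h),
            Finset.card_range]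
        have hcyl : ν {ρ | ∀ c ∈ Fm, ρ c = gm c} ≤ 2⁻¹ ^ (m + 2) := by
          rw [hν Fm gm]
          calc ∏ c ∈ Fm, (2 : ℝ≥0∞)⁻¹ ^ (gm c + 1) ≤ ∏ _c ∈ Fm, (2 : ℝ≥0∞)⁻¹ := by
                apply Finset.prod_le_prod'
                intro c _
                calc (2 : ℝ≥0∞)⁻¹ ^ (gm c + 1) = 2⁻¹ ^ (gm c) * 2⁻¹ := pow_succ _ _
                  _ ≤ 1 * 2⁻¹ :=
                      mul_le_mul_left (pow_le_one' (by norm_num) _) _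
                  _ = 2⁻¹ := one_mul _
            _ = 2⁻¹ ^ (m + 2) := by rw [Finset.prod_const, hcard]
        calc ν (X u m) ≤ ν ({ρ | s ρ n = u} ∩ {ρ | ∀ c ∈ Fm, ρ c = gm c}) :=
              measure_mono (Set.inter_subset_inter_right _ hsub)
          _ = ν {ρ | s ρ n = u} * ν {ρ | ∀ c ∈ Fm, ρ c = gm c} :=
              indep_lemma ν hν B α hα Fm hFα gm _ (hsm n u)
          _ ≤ ν {ρ | s ρ n = u} * 2⁻¹ ^ (m + 2) := mul_le_mul_right hcyl _
      · have hX : X u m = ∅ := by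
          rw [hXdef]
          ext ρ
          simp [hc]
        rw [hX]
        simp only [measure_empty]
        exact zero_le
    calc ν (E n) ≤ ∑' u : List ℕ, ν (⋃ m : ℕ, X u m) :=
          le_trans (measure_mono hcover) (measure_iUnion_le _)
      _ ≤ ∑' u : List ℕ, ∑' m : ℕ, ν (X u m) :=
          ENNReal.tsum_le_tsum fun u => measure_iUnion_le _
      _ ≤ ∑' u : List ℕ, ∑' m : ℕ, (if n ≤ m then ν {ρ | s ρ n = u} * 2⁻¹ ^ (m + 2) else 0) :=
          ENNReal.tsum_le_tsum fun u => ENNReal.tsum_le_tsum fun m => hterm u m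
      _ = ∑' u : List ℕ, ν {ρ | s ρ n = u} * 2⁻¹ ^ (n + 1) := by
          congr 1
          funext u
          calc ∑' m : ℕ, (if n ≤ m then ν {ρ | s ρ n = u} * 2⁻¹ ^ (m + 2) else 0)
              = ∑' m : ℕ, ν {ρ | s ρ n = u} * (if n ≤ m then 2⁻¹ ^ (m + 2) else 0) := by
                congr 1
                funext m
                by_cases hm : n ≤ m <;> simp [hm]
            _ = ν {ρ | s ρ n = u} * ∑' m : ℕ, (if n ≤ m then (2:ℝ≥0∞)⁻¹ ^ (m + 2) else 0) :=
                ENNReal.tsum_mul_left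
            _ = ν {ρ | s ρ n = u} * 2⁻¹ ^ (n + 1) := by rw [geom_tail]
      _ = (∑' u : List ℕ, ν {ρ | s ρ n = u}) * 2⁻¹ ^ (n + 1) := ENNReal.tsum_mul_right
      _ = 2⁻¹ ^ (n + 1) := by rw [hsum1 n, one_mul]
  have hsumE : (∑' n : ℕ, ν (E n)) ≠ ⊤ :=
    ne_top_of_le_ne_top geom_total (ENNReal.tsum_le_tsum hEbound)
  filter_upwards [MeasureTheory.ae_eventually_notMem hsumE] with ρ hρ hU
  obtain ⟨N, hN⟩ := Filter.eventually_atTop.mp hρ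
  apply Set.Finite.subset (Set.Finite.union (Set.finite_Iio N)
    (((Finset.range (n₀ + 1)).image fun m =>
      (sFnP e α m ρ).getD (e n₀).length 0).finite_toSet))
  rintro n ⟨hnA, m, hm⟩
  have hp : e n₀ ++ [n] <+: s ρ n := hext ρ n hnA
  have hU' : ∀ m' : ℕ, ¬ (sFnP e α m' ρ <+: e n₀) := fun m' h => hU ⟨m', h⟩
  have hmlen : (sFnP e α m ρ).length = (e m).length + (m + 2) := sFnP_length e α m ρ
  have hEmem : ρ ∈ E n → n ∈ Set.Iio N ∪
      ↑((Finset.range (n₀ + 1)).image fun m' => (sFnP e α m' ρ).getD (e n₀).length 0) := by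
    intro hEn
    left
    by_contra hlt
    exact hN n (le_of_not_gt (by simpa using hlt)) hEn
  have hpin : ∀ m' : ℕ, m' ≤ n₀ → (sFnP e α m' ρ).getD (e n₀).length 0 = n →
      n ∈ Set.Iio N ∪
      ↑((Finset.range (n₀ + 1)).image fun m'' => (sFnP e α m'' ρ).getD (e n₀).length 0) := by
    intro m' h1 h2
    right
    simp only [Finset.coe_image, Set.mem_image, Finset.mem_coe, Finset.mem_range]
    exact ⟨m', by omega, h2⟩
  have hmn₀ : ∀ m' : ℕ, e m' <+: e n₀ → m' ≤ n₀ := by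
    intro m' h
    by_cases hq : e m' = e n₀
    · exact le_of_eq (hbij.1 hq)
    · exact le_of_lt (hord m' n₀ h hq)
  have hemp : e m <+: sFnP e α m ρ := List.prefix_append _ _
  rcases List.prefix_or_prefix_of_prefix hm hp with hcase | hcase
  · -- sFnP e α m ρ <+: e n₀ ++ [n]
    by_cases hlen : (sFnP e α m ρ).length ≤ (e n₀).length
    · exact absurd (List.prefix_of_prefix_length_le hcase (List.prefix_append _ _) hlen)
        (hU' m)
    · have hlen2 : (sFnP e α m ρ).length = (e n₀ ++ [n]).length := by
        have := hcase.length_le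
        simp only [List.length_append, List.length_cons, List.length_nil] at this ⊢
        omega
      have heq : sFnP e α m ρ = e n₀ ++ [n] := List.IsPrefix.eq_of_length_le hcase hlen2.ge
      have hEm : e m <+: e n₀ := by
        have h1 : e m <+: e n₀ ++ [n] := heq ▸ hemp
        apply List.prefix_of_prefix_length_le h1 (List.prefix_append _ _)
        have h3 := congrArg List.length heq
        simp only [List.length_append, List.length_cons, List.length_nil, hmlen] at h3
        omega
      exact hpin m (hmn₀ m hEm) (by rw [heq]; exact getD_of_prefix (List.prefix_refl _))
  · -- e n₀ ++ [n] <+: sFnP e α m ρ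
    rcases List.prefix_or_prefix_of_prefix hemp hcase with hc2 | hc2
    · -- e m <+: e n₀ ++ [n]
      by_cases hq : e m = e n₀ ++ [n]
      · exact hEmem ⟨m, by rw [hq], hm⟩
      · have hlen3 : (e m).length ≤ (e n₀).length := by
          have h4 := hc2.length_le
          simp only [List.length_append, List.length_cons, List.length_nil] at h4
          rcases Nat.lt_or_ge (e m).length ((e n₀).length + 1) with h5 | h5
          · omega
          · exact absurd (List.IsPrefix.eq_of_length_le hc2 (by simp; omega)) hq
        have hEm : e m <+: e n₀ :=
          List.prefix_of_prefix_length_le hc2 (List.prefix_append _ _) hlen3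
        exact hpin m (hmn₀ m hEm) (getD_of_prefix hcase)
    · exact hEmem ⟨m, hc2, hm⟩
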